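/- For every integer q ≥ 2, the set of additive submonoids of ℚ whose carrier set is contained in Z[1/q] is uncountable (not a countable set). -/

import Mathlib

/-- `Z[1/q]`: the rationals of the form `n / q^i`. -/
def ZOneOverQ (q : ℤ) : Set ℚ := {x : ℚ | ∃ (n : ℤ) (i : ℕ), x = (n : ℚ) / (q : ℚ) ^ i}

lemma ZOneOverQ.zero_mem (q : ℤ) : (0 : ℚ) ∈ ZOneOverQ q := ⟨0, 0, by norm_num⟩

lemma ZOneOverQ.add_mem {q : ℤ} (hq : 2 ≤ q) {x y : ℚ} (hx : x ∈ ZOneOverQ q)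
    (hy : y ∈ ZOneOverQ q) : x + y ∈ ZOneOverQ q := by
  obtain ⟨n, i, rfl⟩ := hx
  obtain ⟨m, j, rfl⟩ := hy
  have hq0 : (q : ℚ) ≠ 0 := by
    have : (0:ℤ) < q := by omega
    exact_mod_cast this.ne'
  refine ⟨n * q ^ j + m * q ^ i, i + j, ?_⟩
  field_simp
  push_cast
  ring

/-- Density of `Z[1/q]` in positive reals. -/
lemma ZOneOverQ.dense {q : ℤ} (hq : 2 ≤ q) {a b : ℝ} (ha : 0 < a) (hab : a < b) :
    ∃ x : ℚ, x ∈ ZOneOverQ q ∧ a ≤ (x : ℝ) ∧ (x : ℝ) < b := by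
  have hq1 : (1 : ℝ) < (q : ℝ) := by exact_mod_cast (by omega : (1:ℤ) < q)
  obtain ⟨i, hi⟩ := pow_unbounded_of_one_lt ((b - a)⁻¹) hq1
  have hqi : (0 : ℝ) < (q : ℝ) ^ i := by positivity
  set n : ℤ := ⌈a * (q : ℝ) ^ i⌉ with hn
  refine ⟨(n : ℚ) / (q : ℚ) ^ i, ⟨n, i, rfl⟩, ?_, ?_⟩
  · have h1 : a * (q : ℝ) ^ i ≤ (n : ℝ) := Int.le_ceil _
    have : a ≤ (n : ℝ) / (q : ℝ) ^ i := (le_div_iff₀ hqi).2 h1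
    push_cast
    exact this
  · have h2 : (n : ℝ) < a * (q : ℝ) ^ i + 1 := Int.ceil_lt_add_one _
    have hinv : ((q : ℝ) ^ i)⁻¹ < b - a := by
      rw [inv_lt_comm₀ hqi (by linarith)]
      exact (inv_inv (b-a) ▸ hi)
    have : (n : ℝ) / (q : ℝ) ^ i < b := by
      rw [div_lt_iff₀ hqi]
      have h3 : 1 < (b - a) * (q:ℝ)^i := by
        have h4 := mul_lt_mul_of_pos_right hinv hqi
        rwa [inv_mul_cancel₀ hqi.ne'] at h4
      nlinarith [h2, h3]
    push_cast
    exact this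

/-- A submonoid of `ℚ` contained in `Z[1/q]`, parameterized by a real `r`. -/
def Msub (q : ℤ) (hq : 2 ≤ q) (r : ℝ) : AddSubmonoid ℚ where
  carrier := {x : ℚ | x ∈ ZOneOverQ q ∧ (x = 0 ∨ Real.exp r ≤ (x : ℝ))}
  zero_mem' := ⟨ZOneOverQ.zero_mem q, Or.inl rfl⟩
  add_mem' := by
    rintro x y ⟨hx, hx'⟩ ⟨hy, hy'⟩
    refine ⟨ZOneOverQ.add_mem hq hx hy, ?_⟩
    rcases hx' with rfl | hx'
    · simpa using hy'
    rcases hy' with rfl | hy'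
    · simpa using Or.inr hx'
    · refine Or.inr ?_
      have h0 : (0:ℝ) < Real.exp r := Real.exp_pos r
      push_cast
      linarith

/-- The additive submonoids of `ℚ` contained in `Z[1/q]` form an uncountable set. -/
theorem uncountably_many_submonoids (q : ℤ) (hq : 2 ≤ q) :
    ¬ Set.Countable {M : AddSubmonoid ℚ | (M : Set ℚ) ⊆ ZOneOverQ q} := by
  intro h
  have hmem : ∀ r : ℝ, Msub q hq r ∈ {M : AddSubmonoid ℚ | (M : Set ℚ) ⊆ ZOneOverQ q} := by
    intro r x hx
    exact hx.1
  have hinj : Function.Injective (fun r : ℝ => Msub q hq r) := by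
    intro r s hrs
    by_contra hne
    wlog hlt : r < s generalizing r s
    · exact this hrs.symm (Ne.symm hne) (by cases (lt_or_gt_of_ne hne) with
        | inl h => exact absurd h hlt
        | inr h => exact h)
    have hexp : Real.exp r < Real.exp s := Real.exp_lt_exp.2 hlt
    obtain ⟨x, hxZ, hx1, hx2⟩ := ZOneOverQ.dense hq (Real.exp_pos r) hexp
    have hrs' : Msub q hq r = Msub q hq s := hrs
    have hxr : x ∈ Msub q hq r := ⟨hxZ, Or.inr hx1⟩
    rw [hrs'] at hxr
    rcases hxr.2 with rfl | hge
    · simp at hx1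
      linarith [Real.exp_pos r]
    · linarith
  have : Set.Countable (Set.univ : Set ℝ) := by
    have := h.preimage hinj
    have : Set.Countable ((fun r : ℝ => Msub q hq r) ⁻¹'
        {M : AddSubmonoid ℚ | (M : Set ℚ) ⊆ ZOneOverQ q}) := h.preimage hinj
    have huniv : ((fun r : ℝ => Msub q hq r) ⁻¹'
        {M : AddSubmonoid ℚ | (M : Set ℚ) ⊆ ZOneOverQ q}) = Set.univ := by
      ext r; simpa using hmem r
    rwa [huniv] at this
  exact Cardinal.not_countable_real this
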